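/- Let (A,≺,≻) be a finite-dimensional pre-alternative algebra over a field of characteristic ≠ 2 with basis {e₁,…,eₙ} and dual basis {e₁*,…,eₙ*} of A*. The space Â = A⊕A* with products (x+a*) ≺' (y+b*) = x≺y + l_≻*(y)a* and (x+a*) ≻' (y+b*) = x≻y + r_≺*(x)b* is a pre-alternative algebra (the semidirect sum A⋉_{0, l_≻*, r_≺*, 0}A*), and r = Σᵢ (eᵢ⊗eᵢ* + eᵢ*⊗eᵢ) ∈ Â⊗Â is a nondegenerate symmetric solution of the PA-equations in Â; moreover the bilinear form 𝓑(u,v) = ⟨T_r⁻¹(u), v⟩ induced by r is 𝓑(x+a*, y+b*) = ⟨x, b*⟩ + ⟨a*, y⟩, which is a 2-cocycle of Â. -/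

import Mathlib

open TensorProduct

universe u v w

variable {k : Type u} [Field k]

section Defs

variable {M : Type v} {V : Type w} [AddCommGroup M] [Module k M] [AddCommGroup V] [Module k V]

/-- Alternative algebra: both alternative laws. -/
def IsAlt (m : M →ₗ[k] M →ₗ[k] M) : Prop :=
  (∀ x y : M, m (m x x) y = m x (m x y)) ∧ (∀ x y : M, m (m y x) x = m y (m x x))

/-- right associator -/
def rAssoc (p s : M →ₗ[k] M →ₗ[k] M) (x y z : M) : M :=
  p (p x y) z - p x (p y z + s y z)

/-- middle associator -/
def mAssoc (p s : M →ₗ[k] M →ₗ[k] M) (x y z : M) : M :=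
  p (s x y) z - s x (p y z)

/-- left associator -/
def lAssoc (p s : M →ₗ[k] M →ₗ[k] M) (x y z : M) : M :=
  s (p x y + s x y) z - s x (s y z)

/-- Pre-alternative algebra. -/
def IsPreAlt (p s : M →ₗ[k] M →ₗ[k] M) : Prop :=
  (∀ x y z : M, mAssoc p s x y z + rAssoc p s y x z = 0) ∧
  (∀ x y z : M, mAssoc p s x y z + lAssoc p s x z y = 0) ∧
  (∀ x y : M, rAssoc p s y x x = 0) ∧
  (∀ x y : M, lAssoc p s x x y = 0)

/-- Bimodule of an alternative algebra. -/
def IsAltBimod (m : M →ₗ[k] M →ₗ[k] M) (L R : M →ₗ[k] Module.End k V) : Prop :=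
  (∀ x : M, L (m x x) = L x * L x) ∧
  (∀ x : M, R (m x x) = R x * R x) ∧
  (∀ x y : M, R y * L x - L x * R y = R (m x y) - R y * R x) ∧
  (∀ x y : M, L (m y x) - L y * L x = L y * R x - R x * L y)

/-- Bimodule of a pre-alternative algebra. -/
def IsPreAltBimod (p s : M →ₗ[k] M →ₗ[k] M) (Lp Rp Ls Rs : M →ₗ[k] Module.End k V) : Prop :=
  (∀ x y : M, Ls ((p x y + s x y) + (p y x + s y x)) = Ls x * Ls y + Ls y * Ls x) ∧
  (∀ x y : M, Rs y * ((Lp x + Ls x) + (Rp x + Rs x)) = Ls x * Rs y + Rs (s x y)) ∧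
  (∀ x y : M, Rp y * Ls x + Rp y * Rp x = Ls x * Rp y + Rp (p x y + s x y)) ∧
  (∀ x y : M, Rp y * Rs x + Rp y * Lp x = Rs (p x y) + Lp x * (Rp y + Rs y)) ∧
  (∀ x y : M, Lp (s x y) + Lp (p y x) = Ls x * Lp y + Lp y * (Lp x + Ls x)) ∧
  (∀ x y : M, Ls (p y x + s y x) + Rp x * Ls y = Ls y * Ls x + Ls y * Rp x) ∧
  (∀ x y : M, Rs y * (Rp x + Rs x) + Rp x * Rs y = Rs (s x y) + Rs (p y x)) ∧
  (∀ x y : M, Rs x * (Lp y + Ls y) + Lp (s y x) = Ls y * Rs x + Ls y * Lp x) ∧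
  (∀ x y : M, Rp y * Rp x + Rp x * Rp y = Rp ((p x y + s x y) + (p y x + s y x))) ∧
  (∀ x y : M, Rp y * Lp x + Lp (p x y) = Lp x * ((Rp y + Rs y) + (Lp y + Ls y)))

/-- Dual family of endomorphisms: `(dualT L) x = (L x)^*`. -/
noncomputable def dualT (L : M →ₗ[k] Module.End k V) :
    M →ₗ[k] Module.End k (Module.Dual k V) :=
  (Module.Dual.transpose (R := k) (M := V) (M' := V)) ∘ₗ L

/-- The linear map `A* → A` associated to an element of `A ⊗ A`:
`⟨u* ⊗ v*, r⟩ = ⟨u*, T_r v*⟩`, i.e. `T_r(v*) = Σ v*(bᵢ) • aᵢ`. -/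
noncomputable def Tr : (M ⊗[k] M) →ₗ[k] Module.Dual k M →ₗ[k] M :=
  TensorProduct.lift (LinearMap.mk₂ k
    (fun a b => (Module.Dual.eval k M b).smulRight a)
    (fun a a' b => by ext f; simp)
    (fun c a b => by ext f; simp only [LinearMap.smulRight_apply, LinearMap.smul_apply,
      Module.Dual.eval_apply]; exact smul_comm _ _ _)
    (fun a b b' => by ext f; simp [add_smul])
    (fun c a b => by ext f; simp [map_smul, mul_smul]))

noncomputable def tlift (m : M →ₗ[k] M →ₗ[k] M) : M ⊗[k] M →ₗ[k] M := TensorProduct.lift m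

/-- `r₁₂ ⋄ r₁₃` : `(a⊗b)⊗(c⊗d) ↦ (a⋄c)⊗b⊗d`. -/
noncomputable def comp12_13 (m : M →ₗ[k] M →ₗ[k] M) :
    (M ⊗[k] M) ⊗[k] (M ⊗[k] M) →ₗ[k] M ⊗[k] (M ⊗[k] M) :=
  (TensorProduct.map (tlift m) LinearMap.id) ∘ₗ
    (TensorProduct.tensorTensorTensorComm k M M M M).toLinearMap

/-- `r₁₃ ⋄ r₁₂` : `(a⊗b)⊗(c⊗d) ↦ (a⋄c)⊗d⊗b`. -/
noncomputable def comp13_12 (m : M →ₗ[k] M →ₗ[k] M) :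
    (M ⊗[k] M) ⊗[k] (M ⊗[k] M) →ₗ[k] M ⊗[k] (M ⊗[k] M) :=
  (TensorProduct.map (tlift m) (TensorProduct.comm k M M).toLinearMap) ∘ₗ
    (TensorProduct.tensorTensorTensorComm k M M M M).toLinearMap

/-- `r₁₂ ⋄ r₂₃` : `(a⊗b)⊗(c⊗d) ↦ a⊗(b⋄c)⊗d`. -/
noncomputable def comp12_23 (m : M →ₗ[k] M →ₗ[k] M) :
    (M ⊗[k] M) ⊗[k] (M ⊗[k] M) →ₗ[k] M ⊗[k] (M ⊗[k] M) :=
  (TensorProduct.map LinearMap.id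
      ((TensorProduct.map (tlift m) LinearMap.id) ∘ₗ
        (TensorProduct.assoc k M M M).symm.toLinearMap)) ∘ₗ
    (TensorProduct.assoc k M M (M ⊗[k] M)).toLinearMap

/-- `r₂₃ ⋄ r₁₂` : `(a⊗b)⊗(c⊗d) ↦ c⊗(a⋄d)⊗b`. -/
noncomputable def comp23_12 (m : M →ₗ[k] M →ₗ[k] M) :
    (M ⊗[k] M) ⊗[k] (M ⊗[k] M) →ₗ[k] M ⊗[k] (M ⊗[k] M) :=
  (TensorProduct.map LinearMap.id
      ((TensorProduct.map (tlift m.flip) LinearMap.id) ∘ₗ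
        (TensorProduct.assoc k M M M).symm.toLinearMap)) ∘ₗ
    (TensorProduct.assoc k M M (M ⊗[k] M)).toLinearMap ∘ₗ
    (TensorProduct.comm k (M ⊗[k] M) (M ⊗[k] M)).toLinearMap

/-- `r₁₃ ⋄ r₂₃` : `(a⊗b)⊗(c⊗d) ↦ a⊗c⊗(b⋄d)`. -/
noncomputable def comp13_23 (m : M →ₗ[k] M →ₗ[k] M) :
    (M ⊗[k] M) ⊗[k] (M ⊗[k] M) →ₗ[k] M ⊗[k] (M ⊗[k] M) :=
  (TensorProduct.map LinearMap.id (TensorProduct.map LinearMap.id (tlift m))) ∘ₗ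
    (TensorProduct.assoc k M M (M ⊗[k] M)).toLinearMap ∘ₗ
    (TensorProduct.tensorTensorTensorComm k M M M M).toLinearMap

/-- `r₂₃ ⋄ r₁₃` : `(a⊗b)⊗(c⊗d) ↦ c⊗a⊗(b⋄d)`. -/
noncomputable def comp23_13 (m : M →ₗ[k] M →ₗ[k] M) :
    (M ⊗[k] M) ⊗[k] (M ⊗[k] M) →ₗ[k] M ⊗[k] (M ⊗[k] M) :=
  (TensorProduct.map LinearMap.id (TensorProduct.map LinearMap.id (tlift m))) ∘ₗ
    (TensorProduct.assoc k M M (M ⊗[k] M)).toLinearMap ∘ₗ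
    (TensorProduct.map (TensorProduct.comm k M M).toLinearMap LinearMap.id) ∘ₗ
    (TensorProduct.tensorTensorTensorComm k M M M M).toLinearMap

/-- The alternative Yang–Baxter expression `r₂₃∘r₁₂ − r₁₂∘r₁₃ − r₁₃∘r₂₃`. -/
noncomputable def ayb (m : M →ₗ[k] M →ₗ[k] M) (r : M ⊗[k] M) : M ⊗[k] (M ⊗[k] M) :=
  comp23_12 m (r ⊗ₜ r) - comp12_13 m (r ⊗ₜ r) - comp13_23 m (r ⊗ₜ r)

/-- PA-equations. -/
noncomputable def PA11 (p s : M →ₗ[k] M →ₗ[k] M) (r : M ⊗[k] M) : M ⊗[k] (M ⊗[k] M) :=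
  comp12_13 (p + s) (r ⊗ₜ r) - comp23_12 s (r ⊗ₜ r) - comp13_23 p (r ⊗ₜ r)

noncomputable def PA12 (p s : M →ₗ[k] M →ₗ[k] M) (r : M ⊗[k] M) : M ⊗[k] (M ⊗[k] M) :=
  comp13_12 (p + s) (r ⊗ₜ r) - comp12_23 p (r ⊗ₜ r) - comp23_13 s (r ⊗ₜ r)

noncomputable def PA21 (p s : M →ₗ[k] M →ₗ[k] M) (r : M ⊗[k] M) : M ⊗[k] (M ⊗[k] M) :=
  comp12_23 (p + s) (r ⊗ₜ r) - comp23_13 p (r ⊗ₜ r) - comp13_12 s (r ⊗ₜ r)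

noncomputable def PA22 (p s : M →ₗ[k] M →ₗ[k] M) (r : M ⊗[k] M) : M ⊗[k] (M ⊗[k] M) :=
  comp23_12 (p + s) (r ⊗ₜ r) - comp13_23 s (r ⊗ₜ r) - comp12_13 p (r ⊗ₜ r)

noncomputable def PA31 (p s : M →ₗ[k] M →ₗ[k] M) (r : M ⊗[k] M) : M ⊗[k] (M ⊗[k] M) :=
  comp13_23 (p + s) (r ⊗ₜ r) - comp12_13 s (r ⊗ₜ r) - comp23_12 p (r ⊗ₜ r)

noncomputable def PA32 (p s : M →ₗ[k] M →ₗ[k] M) (r : M ⊗[k] M) : M ⊗[k] (M ⊗[k] M) :=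
  comp23_13 (p + s) (r ⊗ₜ r) - comp13_12 p (r ⊗ₜ r) - comp12_23 s (r ⊗ₜ r)

/-- Semidirect sum product on `M × V` for an alternative algebra `M` and a bimodule `(V,L,R)`. -/
def sd (m : M →ₗ[k] M →ₗ[k] M) (L R : M →ₗ[k] Module.End k V) :
    (M × V) →ₗ[k] (M × V) →ₗ[k] (M × V) :=
  LinearMap.mk₂ k (fun x y => (m x.1 y.1, L x.1 y.2 + R y.1 x.2))
    (fun x x' y => by refine Prod.ext ?_ ?_ <;> simp [map_add] <;> abel)
    (fun c x y => by refine Prod.ext ?_ ?_ <;> simp [map_smul, smul_add])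
    (fun x y y' => by refine Prod.ext ?_ ?_ <;> simp [map_add] <;> abel)
    (fun c x y => by refine Prod.ext ?_ ?_ <;> simp [map_smul, smul_add])

end Defs

/-- The `≺` product of the semidirect sum `A ⋉_{0, l_≻*, r_≺*, 0} A*`. -/
noncomputable def sdPreP {A : Type v} [AddCommGroup A] [Module k A]
    (p s : A →ₗ[k] A →ₗ[k] A) :
    (A × Module.Dual k A) →ₗ[k] (A × Module.Dual k A) →ₗ[k] (A × Module.Dual k A) :=
  LinearMap.mk₂ k (fun u v => (p u.1 v.1, dualT s v.1 u.2))
    (fun u u' v => by refine Prod.ext ?_ ?_ <;> simp [map_add])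
    (fun c u v => by refine Prod.ext ?_ ?_ <;> simp [map_smul])
    (fun u v v' => by refine Prod.ext ?_ ?_ <;> simp [map_add])
    (fun c u v => by refine Prod.ext ?_ ?_ <;> simp [map_smul])

/-- The `≻` product of the semidirect sum `A ⋉_{0, l_≻*, r_≺*, 0} A*`. -/
noncomputable def sdPreS {A : Type v} [AddCommGroup A] [Module k A]
    (p s : A →ₗ[k] A →ₗ[k] A) :
    (A × Module.Dual k A) →ₗ[k] (A × Module.Dual k A) →ₗ[k] (A × Module.Dual k A) :=
  LinearMap.mk₂ k (fun u v => (s u.1 v.1, dualT p.flip u.1 v.2))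
    (fun u u' v => by refine Prod.ext ?_ ?_ <;> simp [map_add])
    (fun c u v => by refine Prod.ext ?_ ?_ <;> simp [map_smul])
    (fun u v v' => by refine Prod.ext ?_ ?_ <;> simp [map_add])
    (fun c u v => by refine Prod.ext ?_ ?_ <;> simp [map_smul])


section Aux1

variable {M : Type v} [AddCommGroup M] [Module k M]

@[simp] lemma c1213 (m : M →ₗ[k] M →ₗ[k] M) (x y z w : M) :
    comp12_13 m ((x ⊗ₜ y) ⊗ₜ (z ⊗ₜ w)) = m x z ⊗ₜ (y ⊗ₜ w) := by
  simp [comp12_13, tlift, tensorTensorTensorComm_tmul]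

@[simp] lemma c1312 (m : M →ₗ[k] M →ₗ[k] M) (x y z w : M) :
    comp13_12 m ((x ⊗ₜ y) ⊗ₜ (z ⊗ₜ w)) = m x z ⊗ₜ (w ⊗ₜ y) := by
  simp [comp13_12, tlift, tensorTensorTensorComm_tmul]

@[simp] lemma c1223 (m : M →ₗ[k] M →ₗ[k] M) (x y z w : M) :
    comp12_23 m ((x ⊗ₜ y) ⊗ₜ (z ⊗ₜ w)) = x ⊗ₜ (m y z ⊗ₜ w) := by
  simp [comp12_23, tlift]

@[simp] lemma c2312 (m : M →ₗ[k] M →ₗ[k] M) (x y z w : M) :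
    comp23_12 m ((x ⊗ₜ y) ⊗ₜ (z ⊗ₜ w)) = z ⊗ₜ (m x w ⊗ₜ y) := by
  simp [comp23_12, tlift]

@[simp] lemma c1323 (m : M →ₗ[k] M →ₗ[k] M) (x y z w : M) :
    comp13_23 m ((x ⊗ₜ y) ⊗ₜ (z ⊗ₜ w)) = x ⊗ₜ (z ⊗ₜ m y w) := by
  simp [comp13_23, tlift, tensorTensorTensorComm_tmul]

@[simp] lemma c2313 (m : M →ₗ[k] M →ₗ[k] M) (x y z w : M) :
    comp23_13 m ((x ⊗ₜ y) ⊗ₜ (z ⊗ₜ w)) = z ⊗ₜ (x ⊗ₜ m y w) := by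
  simp [comp23_13, tlift, tensorTensorTensorComm_tmul]

end Aux1

section Aux2

variable {M : Type v} [AddCommGroup M] [Module k M]

lemma comp_add_gen (C : (M →ₗ[k] M →ₗ[k] M) → ((M ⊗[k] M) ⊗[k] (M ⊗[k] M) →ₗ[k] M ⊗[k] (M ⊗[k] M)))
    (G : (M →ₗ[k] M →ₗ[k] M) → M → M → M → M → M ⊗[k] (M ⊗[k] M))
    (hC : ∀ m x y z w, C m ((x ⊗ₜ y) ⊗ₜ (z ⊗ₜ w)) = G m x y z w)
    (hG : ∀ (m m' : M →ₗ[k] M →ₗ[k] M) x y z w, G (m + m') x y z w = G m x y z w + G m' x y z w)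
    (m m' : M →ₗ[k] M →ₗ[k] M) (t : (M ⊗[k] M) ⊗[k] (M ⊗[k] M)) :
    C (m + m') t = C m t + C m' t := by
  induction t using TensorProduct.induction_on with
  | zero => simp
  | tmul a c =>
    induction a using TensorProduct.induction_on with
    | zero => simp
    | tmul x y =>
      induction c using TensorProduct.induction_on with
      | zero => simp
      | tmul z w => rw [hC, hC, hC, hG]
      | add u v hu hv => simp only [tmul_add, map_add, hu, hv]; abel
    | add u v hu hv => simp only [add_tmul, map_add, hu, hv]; abel
  | add u v hu hv => simp only [map_add, hu, hv]; abel

lemma comp1213_add (m m' : M →ₗ[k] M →ₗ[k] M) (t : (M ⊗[k] M) ⊗[k] (M ⊗[k] M)) :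
    comp12_13 (m + m') t = comp12_13 m t + comp12_13 m' t :=
  comp_add_gen comp12_13 (fun m x y z w => m x z ⊗ₜ (y ⊗ₜ w)) (fun m => c1213 m)
    (fun m m' x y z w => by simp [add_tmul]) m m' t

lemma comp1312_add (m m' : M →ₗ[k] M →ₗ[k] M) (t : (M ⊗[k] M) ⊗[k] (M ⊗[k] M)) :
    comp13_12 (m + m') t = comp13_12 m t + comp13_12 m' t :=
  comp_add_gen comp13_12 (fun m x y z w => m x z ⊗ₜ (w ⊗ₜ y)) (fun m => c1312 m)
    (fun m m' x y z w => by simp [add_tmul]) m m' t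

lemma comp1223_add (m m' : M →ₗ[k] M →ₗ[k] M) (t : (M ⊗[k] M) ⊗[k] (M ⊗[k] M)) :
    comp12_23 (m + m') t = comp12_23 m t + comp12_23 m' t :=
  comp_add_gen comp12_23 (fun m x y z w => x ⊗ₜ (m y z ⊗ₜ w)) (fun m => c1223 m)
    (fun m m' x y z w => by simp [add_tmul, tmul_add]) m m' t

lemma comp2312_add (m m' : M →ₗ[k] M →ₗ[k] M) (t : (M ⊗[k] M) ⊗[k] (M ⊗[k] M)) :
    comp23_12 (m + m') t = comp23_12 m t + comp23_12 m' t :=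
  comp_add_gen comp23_12 (fun m x y z w => z ⊗ₜ (m x w ⊗ₜ y)) (fun m => c2312 m)
    (fun m m' x y z w => by simp [add_tmul, tmul_add]) m m' t

lemma comp1323_add (m m' : M →ₗ[k] M →ₗ[k] M) (t : (M ⊗[k] M) ⊗[k] (M ⊗[k] M)) :
    comp13_23 (m + m') t = comp13_23 m t + comp13_23 m' t :=
  comp_add_gen comp13_23 (fun m x y z w => x ⊗ₜ (z ⊗ₜ m y w)) (fun m => c1323 m)
    (fun m m' x y z w => by simp [tmul_add]) m m' t

lemma comp2313_add (m m' : M →ₗ[k] M →ₗ[k] M) (t : (M ⊗[k] M) ⊗[k] (M ⊗[k] M)) :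
    comp23_13 (m + m') t = comp23_13 m t + comp23_13 m' t :=
  comp_add_gen comp23_13 (fun m x y z w => z ⊗ₜ (x ⊗ₜ m y w)) (fun m => c2313 m)
    (fun m m' x y z w => by simp [tmul_add]) m m' t

end Aux2

section Aux3

variable {A : Type v} [AddCommGroup A] [Module k A]
variable (p s : A →ₗ[k] A →ₗ[k] A)

local notation "il" => LinearMap.inl k A (Module.Dual k A)
local notation "ir" => LinearMap.inr k A (Module.Dual k A)

lemma dualT_eq (L : A →ₗ[k] A →ₗ[k] A) (y : A) (a : Module.Dual k A) :
    dualT L y a = a ∘ₗ L y := by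
  ext z; simp [dualT, Module.Dual.transpose_apply]

@[simp] lemma Puu (x y : A) : sdPreP p s (il x) (il y) = il (p x y) := by
  refine Prod.ext ?_ ?_ <;> simp [sdPreP, dualT]

@[simp] lemma Pud (x : A) (a : Module.Dual k A) : sdPreP p s (il x) (ir a) = 0 := by
  refine Prod.ext ?_ ?_ <;> simp [sdPreP, dualT]

@[simp] lemma Pdu (a : Module.Dual k A) (y : A) :
    sdPreP p s (ir a) (il y) = ir (a ∘ₗ s y) := by
  refine Prod.ext ?_ ?_ <;> simp [sdPreP, dualT_eq]

@[simp] lemma Pdd (a c : Module.Dual k A) : sdPreP p s (ir a) (ir c) = 0 := by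
  refine Prod.ext ?_ ?_ <;> simp [sdPreP, dualT]

@[simp] lemma Suu (x y : A) : sdPreS p s (il x) (il y) = il (s x y) := by
  refine Prod.ext ?_ ?_ <;> simp [sdPreS, dualT]

@[simp] lemma Sud (x : A) (a : Module.Dual k A) :
    sdPreS p s (il x) (ir a) = ir (a ∘ₗ p.flip x) := by
  refine Prod.ext ?_ ?_ <;> simp [sdPreS, dualT_eq]

@[simp] lemma Sdu (a : Module.Dual k A) (y : A) : sdPreS p s (ir a) (il y) = 0 := by
  refine Prod.ext ?_ ?_ <;> simp [sdPreS, dualT]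

@[simp] lemma Sdd (a c : Module.Dual k A) : sdPreS p s (ir a) (ir c) = 0 := by
  refine Prod.ext ?_ ?_ <;> simp [sdPreS, dualT]

end Aux3

section Aux4

variable {A : Type v} [AddCommGroup A] [Module k A]
variable {ι : Type*} [Fintype ι] (b : Module.Basis ι k A)

local notation "il" => LinearMap.inl k A (Module.Dual k A)
local notation "ir" => LinearMap.inr k A (Module.Dual k A)
local notation "Ah" => (A × Module.Dual k A)

lemma collapse {N : Type*} [AddCommMonoid N] [Module k N]
    (Φ : Module.Dual k A →ₗ[k] A →ₗ[k] N) (L : A →ₗ[k] A) :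
    ∑ i, Φ (b.coord i ∘ₗ L) (b i) = ∑ i, Φ (b.coord i) (L (b i)) := by
  have h1 : ∀ i : ι, (b.coord i ∘ₗ L : Module.Dual k A) =
      ∑ j, (b.coord i ∘ₗ L) (b j) • b.coord j := fun i =>
    (b.sum_dual_apply_smul_coord (b.coord i ∘ₗ L)).symm
  calc ∑ i, Φ (b.coord i ∘ₗ L) (b i)
      = ∑ i, ∑ j, (b.coord i) (L (b j)) • Φ (b.coord j) (b i) := by
        refine Finset.sum_congr rfl fun i _ => ?_
        rw [h1 i]
        simp [Finset.sum_apply, map_sum]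
    _ = ∑ j, Φ (b.coord j) (∑ i, (b.coord i) (L (b j)) • b i) := by
        rw [Finset.sum_comm]
        refine Finset.sum_congr rfl fun j _ => ?_
        simp [map_sum]
        conv_rhs => rw [← b.sum_repr (L (b j))]
        simp only [map_sum, map_smul]
    _ = ∑ j, Φ (b.coord j) (L (b j)) := by
        refine Finset.sum_congr rfl fun j _ => ?_
        congr 1
        simpa [Module.Basis.coord_apply] using b.sum_repr (L (b j))

lemma col12 (L : A →ₗ[k] A) (w : Ah) :
    ∑ i, (ir (b.coord i ∘ₗ L)) ⊗ₜ[k] ((il (b i)) ⊗ₜ[k] w) =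
    ∑ i, (ir (b.coord i)) ⊗ₜ[k] ((il (L (b i))) ⊗ₜ[k] w) := by
  simpa using collapse (N := (A × Module.Dual k A) ⊗[k] ((A × Module.Dual k A) ⊗[k] (A × Module.Dual k A))) b (((TensorProduct.mk k Ah (Ah ⊗[k] Ah)) ∘ₗ ir).compl₂
    (((TensorProduct.mk k Ah Ah).flip w) ∘ₗ il)) L

lemma col13 (L : A →ₗ[k] A) (w : Ah) :
    ∑ i, (ir (b.coord i ∘ₗ L)) ⊗ₜ[k] (w ⊗ₜ[k] (il (b i))) =
    ∑ i, (ir (b.coord i)) ⊗ₜ[k] (w ⊗ₜ[k] (il (L (b i)))) := by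
  simpa using collapse (N := (A × Module.Dual k A) ⊗[k] ((A × Module.Dual k A) ⊗[k] (A × Module.Dual k A))) b (((TensorProduct.mk k Ah (Ah ⊗[k] Ah)) ∘ₗ ir).compl₂
    (((TensorProduct.mk k Ah Ah) w) ∘ₗ il)) L

lemma col21 (L : A →ₗ[k] A) (w : Ah) :
    ∑ i, (il (b i)) ⊗ₜ[k] ((ir (b.coord i ∘ₗ L)) ⊗ₜ[k] w) =
    ∑ i, (il (L (b i))) ⊗ₜ[k] ((ir (b.coord i)) ⊗ₜ[k] w) := by
  simpa using collapse (N := (A × Module.Dual k A) ⊗[k] ((A × Module.Dual k A) ⊗[k] (A × Module.Dual k A))) b ((((TensorProduct.mk k Ah (Ah ⊗[k] Ah)) ∘ₗ il).compl₂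
    (((TensorProduct.mk k Ah Ah).flip w) ∘ₗ ir)).flip) L

lemma col23 (L : A →ₗ[k] A) (w : Ah) :
    ∑ i, w ⊗ₜ[k] ((ir (b.coord i ∘ₗ L)) ⊗ₜ[k] (il (b i))) =
    ∑ i, w ⊗ₜ[k] ((ir (b.coord i)) ⊗ₜ[k] (il (L (b i)))) := by
  simpa using collapse (N := (A × Module.Dual k A) ⊗[k] ((A × Module.Dual k A) ⊗[k] (A × Module.Dual k A))) b ((((TensorProduct.mk k Ah Ah) ∘ₗ ir).compl₂ il).compr₂
    ((TensorProduct.mk k Ah (Ah ⊗[k] Ah)) w)) L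

lemma col31 (L : A →ₗ[k] A) (w : Ah) :
    ∑ i, (il (b i)) ⊗ₜ[k] (w ⊗ₜ[k] (ir (b.coord i ∘ₗ L))) =
    ∑ i, (il (L (b i))) ⊗ₜ[k] (w ⊗ₜ[k] (ir (b.coord i))) := by
  simpa using collapse (N := (A × Module.Dual k A) ⊗[k] ((A × Module.Dual k A) ⊗[k] (A × Module.Dual k A))) b ((((TensorProduct.mk k Ah (Ah ⊗[k] Ah)) ∘ₗ il).compl₂
    (((TensorProduct.mk k Ah Ah) w) ∘ₗ ir)).flip) L

lemma col32 (L : A →ₗ[k] A) (w : Ah) :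
    ∑ i, w ⊗ₜ[k] ((il (b i)) ⊗ₜ[k] (ir (b.coord i ∘ₗ L))) =
    ∑ i, w ⊗ₜ[k] ((il (L (b i))) ⊗ₜ[k] (ir (b.coord i))) := by
  simpa using collapse (N := (A × Module.Dual k A) ⊗[k] ((A × Module.Dual k A) ⊗[k] (A × Module.Dual k A))) b (((((TensorProduct.mk k Ah Ah) ∘ₗ il).compl₂ ir).compr₂
    ((TensorProduct.mk k Ah (Ah ⊗[k] Ah)) w)).flip) L

end Aux4

section Aux5

variable {A : Type v} [AddCommGroup A] [Module k A]
variable {ι : Type*} [Fintype ι]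

local notation "il" => LinearMap.inl k A (Module.Dual k A)
local notation "ir" => LinearMap.inr k A (Module.Dual k A)
local notation "Ah" => (A × Module.Dual k A)

noncomputable def RR (b : Module.Basis ι k A) : Ah ⊗[k] Ah :=
  ∑ i, (il (b i) ⊗ₜ[k] ir (b.coord i) + ir (b.coord i) ⊗ₜ[k] il (b i))

variable (b : Module.Basis ι k A) (p s : A →ₗ[k] A →ₗ[k] A)

noncomputable def al1 (m : A →ₗ[k] A →ₗ[k] A) : Ah ⊗[k] (Ah ⊗[k] Ah) :=
  ∑ i, ∑ j, il (m (b i) (b j)) ⊗ₜ[k] (ir (b.coord i) ⊗ₜ[k] ir (b.coord j))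

noncomputable def al1' (m : A →ₗ[k] A →ₗ[k] A) : Ah ⊗[k] (Ah ⊗[k] Ah) :=
  ∑ i, ∑ j, il (m (b i) (b j)) ⊗ₜ[k] (ir (b.coord j) ⊗ₜ[k] ir (b.coord i))

noncomputable def al2 (m : A →ₗ[k] A →ₗ[k] A) : Ah ⊗[k] (Ah ⊗[k] Ah) :=
  ∑ i, ∑ j, ir (b.coord i) ⊗ₜ[k] (il (m (b i) (b j)) ⊗ₜ[k] ir (b.coord j))

noncomputable def al2' (m : A →ₗ[k] A →ₗ[k] A) : Ah ⊗[k] (Ah ⊗[k] Ah) :=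
  ∑ i, ∑ j, ir (b.coord j) ⊗ₜ[k] (il (m (b i) (b j)) ⊗ₜ[k] ir (b.coord i))

noncomputable def al3 (m : A →ₗ[k] A →ₗ[k] A) : Ah ⊗[k] (Ah ⊗[k] Ah) :=
  ∑ i, ∑ j, ir (b.coord i) ⊗ₜ[k] (ir (b.coord j) ⊗ₜ[k] il (m (b i) (b j)))

noncomputable def al3' (m : A →ₗ[k] A →ₗ[k] A) : Ah ⊗[k] (Ah ⊗[k] Ah) :=
  ∑ i, ∑ j, ir (b.coord j) ⊗ₜ[k] (ir (b.coord i) ⊗ₜ[k] il (m (b i) (b j)))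

example : comp12_13 (sdPreP p s) (RR b ⊗ₜ RR b) = al1 b p + al2' b s := by
  simp only [RR, sum_tmul, tmul_sum, map_sum, add_tmul, tmul_add, map_add, c1213,
    Puu, Pud, Pdu, Pdd, zero_tmul, tmul_zero, add_zero, zero_add, map_zero,
    Finset.sum_const_zero, Finset.sum_add_distrib]
  unfold al1 al2'
  congr 1
  · exact Finset.sum_comm
  · rw [Finset.sum_congr rfl (fun j _ => col12 b (s (b j)) (ir (b.coord j)))]

end Aux5

section Aux6

variable {A : Type v} [AddCommGroup A] [Module k A]
variable {ι : Type*} [Fintype ι]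

local notation "il" => LinearMap.inl k A (Module.Dual k A)
local notation "ir" => LinearMap.inr k A (Module.Dual k A)

variable (b : Module.Basis ι k A) (p s : A →ₗ[k] A →ₗ[k] A)

lemma cP1213 : comp12_13 (sdPreP p s) (RR b ⊗ₜ RR b) = al1 b p + al2' b s := by
  simp only [RR, sum_tmul, tmul_sum, map_sum, add_tmul, tmul_add, map_add, c1213,
    Puu, Pud, Pdu, Pdd, Suu, Sud, Sdu, Sdd, zero_tmul, tmul_zero, add_zero, zero_add,
    map_zero, Finset.sum_const_zero, Finset.sum_add_distrib]
  unfold al1 al2'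
  congr 1
  · exact Finset.sum_comm
  · rw [Finset.sum_congr rfl (fun j _ => col12 b (s (b j)) (ir (b.coord j)))]
lemma cS1213 : comp12_13 (sdPreS p s) (RR b ⊗ₜ RR b) = al1 b s + al3 b p := by
  simp only [RR, sum_tmul, tmul_sum, map_sum, add_tmul, tmul_add, map_add, c1213,
    Puu, Pud, Pdu, Pdd, Suu, Sud, Sdu, Sdd, zero_tmul, tmul_zero, add_zero, zero_add,
    map_zero, Finset.sum_const_zero, Finset.sum_add_distrib]
  unfold al1 al3
  congr 1
  · exact Finset.sum_comm
  · rw [Finset.sum_comm, Finset.sum_congr rfl (fun i _ => col13 b (p.flip (b i)) (ir (b.coord i)))]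
    exact Finset.sum_comm
lemma cP1312 : comp13_12 (sdPreP p s) (RR b ⊗ₜ RR b) = al1' b p + al3' b s := by
  simp only [RR, sum_tmul, tmul_sum, map_sum, add_tmul, tmul_add, map_add, c1312,
    Puu, Pud, Pdu, Pdd, Suu, Sud, Sdu, Sdd, zero_tmul, tmul_zero, add_zero, zero_add,
    map_zero, Finset.sum_const_zero, Finset.sum_add_distrib]
  unfold al1' al3'
  congr 1
  · exact Finset.sum_comm
  · rw [Finset.sum_congr rfl (fun j _ => col13 b (s (b j)) (ir (b.coord j)))]
lemma cS1312 : comp13_12 (sdPreS p s) (RR b ⊗ₜ RR b) = al1' b s + al2 b p := by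
  simp only [RR, sum_tmul, tmul_sum, map_sum, add_tmul, tmul_add, map_add, c1312,
    Puu, Pud, Pdu, Pdd, Suu, Sud, Sdu, Sdd, zero_tmul, tmul_zero, add_zero, zero_add,
    map_zero, Finset.sum_const_zero, Finset.sum_add_distrib]
  unfold al1' al2
  congr 1
  · exact Finset.sum_comm
  · rw [Finset.sum_comm, Finset.sum_congr rfl (fun i _ => col12 b (p.flip (b i)) (ir (b.coord i)))]
    exact Finset.sum_comm
lemma cP1223 : comp12_23 (sdPreP p s) (RR b ⊗ₜ RR b) = al1' b s + al2 b p := by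
  simp only [RR, sum_tmul, tmul_sum, map_sum, add_tmul, tmul_add, map_add, c1223,
    Puu, Pud, Pdu, Pdd, Suu, Sud, Sdu, Sdd, zero_tmul, tmul_zero, add_zero, zero_add,
    map_zero, Finset.sum_const_zero, Finset.sum_add_distrib]
  unfold al2 al1'
  congr 1
  · rw [Finset.sum_congr rfl (fun j _ => col21 b (s (b j)) (ir (b.coord j)))]
  · exact Finset.sum_comm
lemma cS1223 : comp12_23 (sdPreS p s) (RR b ⊗ₜ RR b) = al2 b s + al3' b p := by
  simp only [RR, sum_tmul, tmul_sum, map_sum, add_tmul, tmul_add, map_add, c1223,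
    Puu, Pud, Pdu, Pdd, Suu, Sud, Sdu, Sdd, zero_tmul, tmul_zero, add_zero, zero_add,
    map_zero, Finset.sum_const_zero, Finset.sum_add_distrib]
  unfold al2 al3'
  congr 1
  · exact Finset.sum_comm
  · rw [Finset.sum_comm, Finset.sum_congr rfl (fun i _ => col23 b (p.flip (b i)) (ir (b.coord i)))]
    exact Finset.sum_comm
lemma cP2312 : comp23_12 (sdPreP p s) (RR b ⊗ₜ RR b) = al2' b p + al3 b s := by
  simp only [RR, sum_tmul, tmul_sum, map_sum, add_tmul, tmul_add, map_add, c2312,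
    Puu, Pud, Pdu, Pdd, Suu, Sud, Sdu, Sdd, zero_tmul, tmul_zero, add_zero, zero_add,
    map_zero, Finset.sum_const_zero, Finset.sum_add_distrib]
  unfold al2' al3
  congr 1
  · exact Finset.sum_comm
  · rw [Finset.sum_congr rfl (fun j _ => col23 b (s (b j)) (ir (b.coord j)))]
lemma cS2312 : comp23_12 (sdPreS p s) (RR b ⊗ₜ RR b) = al1 b p + al2' b s := by
  simp only [RR, sum_tmul, tmul_sum, map_sum, add_tmul, tmul_add, map_add, c2312,
    Puu, Pud, Pdu, Pdd, Suu, Sud, Sdu, Sdd, zero_tmul, tmul_zero, add_zero, zero_add,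
    map_zero, Finset.sum_const_zero, Finset.sum_add_distrib]
  unfold al2' al1
  congr 1
  · rw [Finset.sum_comm, Finset.sum_congr rfl (fun i _ => col21 b (p.flip (b i)) (ir (b.coord i)))]
    exact Finset.sum_comm
  · exact Finset.sum_comm
lemma cP1323 : comp13_23 (sdPreP p s) (RR b ⊗ₜ RR b) = al1 b s + al3 b p := by
  simp only [RR, sum_tmul, tmul_sum, map_sum, add_tmul, tmul_add, map_add, c1323,
    Puu, Pud, Pdu, Pdd, Suu, Sud, Sdu, Sdd, zero_tmul, tmul_zero, add_zero, zero_add,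
    map_zero, Finset.sum_const_zero, Finset.sum_add_distrib]
  unfold al3 al1
  congr 1
  · rw [Finset.sum_congr rfl (fun j _ => col31 b (s (b j)) (ir (b.coord j)))]
  · exact Finset.sum_comm
lemma cS1323 : comp13_23 (sdPreS p s) (RR b ⊗ₜ RR b) = al2' b p + al3 b s := by
  simp only [RR, sum_tmul, tmul_sum, map_sum, add_tmul, tmul_add, map_add, c1323,
    Puu, Pud, Pdu, Pdd, Suu, Sud, Sdu, Sdd, zero_tmul, tmul_zero, add_zero, zero_add,
    map_zero, Finset.sum_const_zero, Finset.sum_add_distrib]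
  unfold al3 al2'
  congr 1
  · rw [Finset.sum_comm, Finset.sum_congr rfl (fun i _ => col32 b (p.flip (b i)) (ir (b.coord i)))]
    exact Finset.sum_comm
  · exact Finset.sum_comm
lemma cP2313 : comp23_13 (sdPreP p s) (RR b ⊗ₜ RR b) = al2 b s + al3' b p := by
  simp only [RR, sum_tmul, tmul_sum, map_sum, add_tmul, tmul_add, map_add, c2313,
    Puu, Pud, Pdu, Pdd, Suu, Sud, Sdu, Sdd, zero_tmul, tmul_zero, add_zero, zero_add,
    map_zero, Finset.sum_const_zero, Finset.sum_add_distrib]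
  unfold al3' al2
  congr 1
  · rw [Finset.sum_congr rfl (fun j _ => col32 b (s (b j)) (ir (b.coord j)))]
  · exact Finset.sum_comm
lemma cS2313 : comp23_13 (sdPreS p s) (RR b ⊗ₜ RR b) = al1' b p + al3' b s := by
  simp only [RR, sum_tmul, tmul_sum, map_sum, add_tmul, tmul_add, map_add, c2313,
    Puu, Pud, Pdu, Pdd, Suu, Sud, Sdu, Sdd, zero_tmul, tmul_zero, add_zero, zero_add,
    map_zero, Finset.sum_const_zero, Finset.sum_add_distrib]
  unfold al3' al1'
  congr 1
  · rw [Finset.sum_comm, Finset.sum_congr rfl (fun i _ => col31 b (p.flip (b i)) (ir (b.coord i)))]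
    exact Finset.sum_comm
  · exact Finset.sum_comm

end Aux6

section Aux7

variable {A : Type v} [AddCommGroup A] [Module k A]
variable {ι : Type*} [Fintype ι]

local notation "il" => LinearMap.inl k A (Module.Dual k A)
local notation "ir" => LinearMap.inr k A (Module.Dual k A)
local notation "Ah" => (A × Module.Dual k A)

variable (b : Module.Basis ι k A) (p s : A →ₗ[k] A →ₗ[k] A)

noncomputable local instance acg2 : AddCommGroup (Ah ⊗[k] Ah) :=
  TensorProduct.addCommGroup

noncomputable local instance acg3 : AddCommGroup (Ah ⊗[k] (Ah ⊗[k] Ah)) :=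
  TensorProduct.addCommGroup

lemma pa11 : PA11 (sdPreP p s) (sdPreS p s) (RR b) = 0 := by
  unfold PA11
  rw [comp1213_add, cP1213, cS1213, cS2312, cP1323]; abel

lemma pa12 : PA12 (sdPreP p s) (sdPreS p s) (RR b) = 0 := by
  unfold PA12
  rw [comp1312_add, cP1312, cS1312, cP1223, cS2313]; abel

lemma pa21 : PA21 (sdPreP p s) (sdPreS p s) (RR b) = 0 := by
  unfold PA21
  rw [comp1223_add, cP1223, cS1223, cP2313, cS1312]; abel

lemma pa22 : PA22 (sdPreP p s) (sdPreS p s) (RR b) = 0 := by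
  unfold PA22
  rw [comp2312_add, cP2312, cS2312, cS1323, cP1213]; abel

lemma pa31 : PA31 (sdPreP p s) (sdPreS p s) (RR b) = 0 := by
  unfold PA31
  rw [comp1323_add, cP1323, cS1323, cS1213, cP2312]; abel

lemma pa32 : PA32 (sdPreP p s) (sdPreS p s) (RR b) = 0 := by
  unfold PA32
  rw [comp2313_add, cP2313, cS2313, cP1312, cS1223]; abel

lemma rr_symm : TensorProduct.comm k Ah Ah (RR b) = RR b := by
  unfold RR
  rw [map_sum]
  exact Finset.sum_congr rfl fun i _ => by rw [map_add, comm_tmul, comm_tmul, add_comm]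

@[simp] lemma Tr_tmul {M : Type w} [AddCommGroup M] [Module k M] (x y : M)
    (f : Module.Dual k M) : Tr (x ⊗ₜ[k] y) f = f y • x := by
  simp [Tr]

/-- the pairing `g u v = v.2 u.1 + u.2 v.1` -/
noncomputable def gPair : Ah →ₗ[k] Module.Dual k Ah :=
  LinearMap.mk₂ k (fun u v => v.2 u.1 + u.2 v.1)
    (fun u u' v => by simp; ring) (fun c u v => by simp; ring)
    (fun u v v' => by simp; ring) (fun c u v => by simp; ring)

lemma Tr_RR (f : Module.Dual k Ah) :
    Tr (RR b) f = (∑ i, f (ir (b.coord i)) • b i, ∑ i, f (il (b i)) • b.coord i) := by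
  unfold RR
  rw [map_sum, LinearMap.sum_apply]
  rw [Finset.sum_congr rfl (fun (i : ι) (_ : i ∈ Finset.univ) => by
    rw [map_add, LinearMap.add_apply, Tr_tmul, Tr_tmul]
    exact Prod.ext (by simp) (by simp) :
    ∀ i ∈ Finset.univ, Tr (il (b i) ⊗ₜ[k] ir (b.coord i) + ir (b.coord i) ⊗ₜ[k] il (b i)) f
      = ((f (ir (b.coord i)) • b i, f (il (b i)) • b.coord i) : Ah))]
  exact Prod.ext (by simp [Prod.fst_sum]) (by simp [Prod.snd_sum])

lemma gPair_leftInv (f : Module.Dual k Ah) : gPair (Tr (RR b) f) = f := by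
  have key1 : ∀ (c : k) (x : A), ((c • x, (0 : Module.Dual k A)) : Ah) = c • ((x, 0) : Ah) := by
    intro c x; simp
  have key2 : ∀ (c : k) (a : Module.Dual k A), (((0 : A), c • a) : Ah) = c • ((0, a) : Ah) := by
    intro c a; simp
  apply LinearMap.ext
  intro v
  rw [Tr_RR]
  have hv : f v = f (il v.1) + f (ir v.2) := by
    rw [← map_add]
    congr 1
    exact Prod.ext (by simp) (by simp)
  rw [hv]
  have h1 : f (il v.1) = ∑ i, (b.coord i v.1) • f (il (b i)) := by
    conv_lhs => rw [show v.1 = ∑ i, (b.coord i v.1) • b i by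
      simpa [Module.Basis.coord_apply] using (b.sum_repr v.1).symm]
    simp only [map_sum, map_smul]
  have h2 : f (ir v.2) = ∑ i, (v.2 (b i)) • f (ir (b.coord i)) := by
    conv_lhs => rw [show v.2 = ∑ i, (v.2 (b i)) • b.coord i from
      (b.sum_dual_apply_smul_coord v.2).symm]
    simp only [map_sum, map_smul]
  rw [h1, h2]
  simp only [gPair, LinearMap.mk₂_apply, map_sum, map_smul, LinearMap.sum_apply,
    LinearMap.smul_apply, smul_eq_mul]
  rw [add_comm]
  congr 1 <;> exact Finset.sum_congr rfl fun i _ => mul_comm _ _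

lemma gPair_rightInv (u : Ah) : Tr (RR b) (gPair u) = u := by
  rw [Tr_RR]
  refine Prod.ext ?_ ?_
  · simp only [gPair, LinearMap.mk₂_apply]
    simp only [LinearMap.inr_apply]
    simpa [Module.Basis.coord_apply] using b.sum_repr u.1
  · simp only [gPair, LinearMap.mk₂_apply]
    simp only [LinearMap.inl_apply]
    simpa using b.sum_dual_apply_smul_coord u.2

lemma Tr_RR_bij : Function.Bijective (Tr (RR b)) :=
  Function.bijective_iff_has_inverse.mpr
    ⟨gPair, fun f => gPair_leftInv b f, fun u => gPair_rightInv b u⟩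

lemma form_eq (u v : Ah) (f : Module.Dual k Ah) (hf : Tr (RR b) f = u) :
    f v = v.2 u.1 + u.2 v.1 := by
  have := gPair_leftInv b f
  rw [hf] at this
  rw [← this]
  simp [gPair]

end Aux7

section Aux8

variable {A : Type v} [AddCommGroup A] [Module k A]
variable (p s : A →ₗ[k] A →ₗ[k] A)

lemma lin_r (h3 : ∀ x y : A, rAssoc p s y x x = 0) (y x z : A) :
    rAssoc p s y x z + rAssoc p s y z x = 0 := by
  have h1 := h3 (x + z) y
  have h2 := h3 x y
  have h4 := h3 z y
  simp only [rAssoc, map_add, LinearMap.add_apply] at h1 h2 h4 ⊢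
  linear_combination (norm := module) h1 - h2 - h4

lemma lin_l (h4 : ∀ x y : A, lAssoc p s x x y = 0) (x z y : A) :
    lAssoc p s x z y + lAssoc p s z x y = 0 := by
  have h1 := h4 (x + z) y
  have h2 := h4 x y
  have h3 := h4 z y
  simp only [lAssoc, map_add, LinearMap.add_apply] at h1 h2 h3 ⊢
  linear_combination (norm := module) h1 - h2 - h3

lemma key_ml (h : IsPreAlt p s) (x z w : A) :
    mAssoc p s z w x = lAssoc p s x z w := by
  have h1 := h.2.1 z w x
  have h2 := lin_l p s h.2.2.2 z x w
  simp only [mAssoc, lAssoc, map_add, LinearMap.add_apply] at h1 h2 ⊢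
  linear_combination (norm := module) h1 - h1 + h1 - (h1 + h2) + h1


lemma key_mr (h : IsPreAlt p s) (x z w : A) :
    mAssoc p s z w x = rAssoc p s w x z := by
  have h1 := h.1 z w x
  have h2 := lin_r p s h.2.2.1 w z x
  simp only [mAssoc, rAssoc, map_add, LinearMap.add_apply] at h1 h2 ⊢
  linear_combination (norm := module) h1 - (h1 + h2) + h1

lemma fst_m (U V W : A × Module.Dual k A) :
    (mAssoc (sdPreP p s) (sdPreS p s) U V W).1 = mAssoc p s U.1 V.1 W.1 := by
  simp [mAssoc, sdPreP, sdPreS]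

lemma fst_r (U V W : A × Module.Dual k A) :
    (rAssoc (sdPreP p s) (sdPreS p s) U V W).1 = rAssoc p s U.1 V.1 W.1 := by
  simp [rAssoc, sdPreP, sdPreS]

lemma fst_l (U V W : A × Module.Dual k A) :
    (lAssoc (sdPreP p s) (sdPreS p s) U V W).1 = lAssoc p s U.1 V.1 W.1 := by
  simp [lAssoc, sdPreP, sdPreS]

lemma snd_m (U V W : A × Module.Dual k A) (z : A) :
    (mAssoc (sdPreP p s) (sdPreS p s) U V W).2 z = V.2 (mAssoc p s W.1 z U.1) := by
  simp [mAssoc, sdPreP, sdPreS, dualT, Module.Dual.transpose_apply, map_sub, map_add]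

lemma snd_r (U V W : A × Module.Dual k A) (z : A) :
    (rAssoc (sdPreP p s) (sdPreS p s) U V W).2 z = - U.2 (lAssoc p s V.1 W.1 z) := by
  simp [rAssoc, lAssoc, sdPreP, sdPreS, dualT, Module.Dual.transpose_apply, map_sub, map_add]

lemma snd_l (U V W : A × Module.Dual k A) (z : A) :
    (lAssoc (sdPreP p s) (sdPreS p s) U V W).2 z = - W.2 (rAssoc p s z U.1 V.1) := by
  simp [lAssoc, rAssoc, sdPreP, sdPreS, dualT, Module.Dual.transpose_apply, map_sub, map_add]

lemma sd_isPreAlt (h : IsPreAlt p s) : IsPreAlt (sdPreP p s) (sdPreS p s) := by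
  refine ⟨fun U V W => ?_, fun U V W => ?_, fun U V => ?_, fun U V => ?_⟩
  · refine Prod.ext ?_ ?_
    · rw [Prod.fst_add, fst_m, fst_r, h.1]; rfl
    · refine LinearMap.ext fun z => ?_
      rw [Prod.snd_add, LinearMap.add_apply, snd_m, snd_r, key_ml p s h U.1 W.1 z]
      simp
  · refine Prod.ext ?_ ?_
    · rw [Prod.fst_add, fst_m, fst_l, h.2.1]; rfl
    · refine LinearMap.ext fun z => ?_
      rw [Prod.snd_add, LinearMap.add_apply, snd_m, snd_l, key_mr p s h U.1 W.1 z]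
      simp
  · refine Prod.ext ?_ ?_
    · rw [fst_r, h.2.2.1]; rfl
    · refine LinearMap.ext fun z => ?_
      rw [snd_r, h.2.2.2]
      simp
  · refine Prod.ext ?_ ?_
    · rw [fst_l, h.2.2.2]; rfl
    · refine LinearMap.ext fun z => ?_
      rw [snd_l, h.2.2.1]
      simp

lemma sd_cocycle (U V W : A × Module.Dual k A) :
    ((sdPreP p s U V + sdPreS p s U V).2 W.1 + W.2 (sdPreP p s U V + sdPreS p s U V).1) =
      ((sdPreS p s V W).2 U.1 + U.2 (sdPreS p s V W).1) +
      ((sdPreP p s W U).2 V.1 + V.2 (sdPreP p s W U).1) := by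
  simp [sdPreP, sdPreS, dualT, Module.Dual.transpose_apply, map_add]
  ring

end Aux8
theorem stmt19 {A : Type v} {ι : Type*} [Fintype ι] [AddCommGroup A] [Module k A]
    [FiniteDimensional k A] (hchar : (2 : k) ≠ 0)
    (p s : A →ₗ[k] A →ₗ[k] A) (h : IsPreAlt p s) (b : Module.Basis ι k A)
    (rr : (A × Module.Dual k A) ⊗[k] (A × Module.Dual k A))
    (hrr : rr = ∑ i : ι,
      ((LinearMap.inl k A (Module.Dual k A)) (b i) ⊗ₜ[k]
          (LinearMap.inr k A (Module.Dual k A)) (b.coord i) +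
        (LinearMap.inr k A (Module.Dual k A)) (b.coord i) ⊗ₜ[k]
          (LinearMap.inl k A (Module.Dual k A)) (b i))) :
    IsPreAlt (sdPreP p s) (sdPreS p s) ∧
    Function.Bijective (Tr rr) ∧
    TensorProduct.comm k (A × Module.Dual k A) (A × Module.Dual k A) rr = rr ∧
    PA11 (sdPreP p s) (sdPreS p s) rr = 0 ∧
    PA12 (sdPreP p s) (sdPreS p s) rr = 0 ∧
    PA21 (sdPreP p s) (sdPreS p s) rr = 0 ∧
    PA22 (sdPreP p s) (sdPreS p s) rr = 0 ∧
    PA31 (sdPreP p s) (sdPreS p s) rr = 0 ∧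
    PA32 (sdPreP p s) (sdPreS p s) rr = 0 ∧
    (∀ (u v : A × Module.Dual k A) (f : Module.Dual k (A × Module.Dual k A)),
      Tr rr f = u → f v = v.2 u.1 + u.2 v.1) ∧
    (∀ u v w : A × Module.Dual k A,
      ((sdPreP p s u v + sdPreS p s u v).2 w.1 + w.2 (sdPreP p s u v + sdPreS p s u v).1) =
        ((sdPreS p s v w).2 u.1 + u.2 (sdPreS p s v w).1) +
        ((sdPreP p s w u).2 v.1 + v.2 (sdPreP p s w u).1)) := by
  subst hrr
  exact ⟨sd_isPreAlt p s h, Tr_RR_bij b, rr_symm b, pa11 b p s, pa12 b p s, pa21 b p s,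
    pa22 b p s, pa31 b p s, pa32 b p s, fun u v f hf => form_eq b u v f hf,
    fun u v w => sd_cocycle p s u v w⟩
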